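/- arXiv:2011.01534 — 2 statements merged into one kernel-verified Lean document; each statement's English description precedes it below -/
import Mathlib

section
/- Let n = 2 and let P ∈ U(2,2) be the permutation matrix with rows (0,1,0,0), (1,0,0,0), (0,0,0,1), (0,0,1,0). For M ∈ U(2,2) with block decomposition M = ((A,B),(C,D)) set z := det(iC + D). Then w(P,M) = w(M,P) = (1/(2π))·(Arg(−z) − Arg(z) − Arg(−1)), where Arg denotes the principal argument with values in (−π,π]. -/
noncomputable section
open Matrix Complex
open scoped ComplexOrder

/-- Complex 2n×2n matrices, written in n×n blocks. -/
abbrev HMat (n : ℕ) : Type := Matrix (Fin n ⊕ Fin n) (Fin n ⊕ Fin n) ℂ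

/-- The standard alternating matrix I = ((0,-E),(E,0)). -/
def Imat (n : ℕ) : HMat n := Matrix.fromBlocks 0 (-1) 1 0

/-- The unitary group U(n,n). -/
def UGrp (n : ℕ) : Set (HMat n) := {M | Mᴴ * Imat n * M = Imat n}

/-- The Hermitian upper half-plane: Z = X + iY with X Hermitian and
Y = (Z - Zᴴ)/(2i) Hermitian positive definite. -/
def UHP (n : ℕ) : Set (Matrix (Fin n) (Fin n) ℂ) :=
  {Z | ((2 * Complex.I)⁻¹ • (Z - Zᴴ)).PosDef}

/-- The action M⟨Z⟩ = (AZ+B)(CZ+D)⁻¹. -/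
def matAct {n : ℕ} (M : HMat n) (Z : Matrix (Fin n) (Fin n) ℂ) :
    Matrix (Fin n) (Fin n) ℂ :=
  (M.toBlocks₁₁ * Z + M.toBlocks₁₂) * (M.toBlocks₂₁ * Z + M.toBlocks₂₂)⁻¹

/-- The automorphy factor J(M,Z) = det(CZ+D). -/
def Jfac {n : ℕ} (M : HMat n) (Z : Matrix (Fin n) (Fin n) ℂ) : ℂ :=
  (M.toBlocks₂₁ * Z + M.toBlocks₂₂).det

/-- The distinguished point iE of the upper half-plane. -/
def iE (n : ℕ) : Matrix (Fin n) (Fin n) ℂ := Complex.I • 1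

/-- `L` is the continuous choice of the argument of J(M,Z), normalized so that
`L M (iE)` is the principal value. -/
def IsArgOfJ (n : ℕ) (L : HMat n → Matrix (Fin n) (Fin n) ℂ → ℝ) : Prop :=
  ∀ M ∈ UGrp n, ContinuousOn (L M) (UHP n) ∧
    (∀ Z ∈ UHP n,
      Complex.exp (Complex.I * (L M Z : ℝ)) = Jfac M Z / ((‖Jfac M Z‖ : ℝ) : ℂ)) ∧
    L M (iE n) ∈ Set.Ioc (-Real.pi) Real.pi

/-- w(M,N;Z) = (1/2π)(L(MN,Z) - L(M,N⟨Z⟩) - L(N,Z)). -/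
def wAt {n : ℕ} (L : HMat n → Matrix (Fin n) (Fin n) ℂ → ℝ)
    (M N : HMat n) (Z : Matrix (Fin n) (Fin n) ℂ) : ℝ :=
  (L (M * N) Z - L M (matAct N Z) - L N Z) / (2 * Real.pi)

/-- The cocycle w(M,N), i.e. the common value of w(M,N;Z), evaluated at Z = iE. -/
def wcoc {n : ℕ} (L : HMat n → Matrix (Fin n) (Fin n) ℂ → ℝ) (M N : HMat n) : ℝ :=
  wAt L M N (iE n)

namespace Stmt5Aux

open Matrix Complex

/-- U(n,n) is closed under multiplication. -/
lemma ugrp_mul {n : ℕ} {M N : HMat n} (hM : M ∈ UGrp n) (hN : N ∈ UGrp n) :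
    M * N ∈ UGrp n := by
  simp only [UGrp, Set.mem_setOf_eq] at *
  rw [conjTranspose_mul]
  have h : Nᴴ * Mᴴ * Imat n * (M * N) = Nᴴ * (Mᴴ * Imat n * M) * N := by
    simp only [mul_assoc]
  rw [h, hM, hN]

lemma iE_sub (n : ℕ) :
    (2 * Complex.I)⁻¹ • (iE n - (iE n)ᴴ) = (1 : Matrix (Fin n) (Fin n) ℂ) := by
  have h : (iE n)ᴴ = (-Complex.I) • (1 : Matrix (Fin n) (Fin n) ℂ) := by
    simp [iE, conjTranspose_smul, Complex.star_def, Complex.conj_I]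
  rw [h, iE, ← sub_smul, smul_smul,
    show Complex.I - -Complex.I = 2 * Complex.I by ring,
    inv_mul_cancel₀ (by simp [Complex.I_ne_zero]), one_smul]

lemma iE_mem (n : ℕ) : iE n ∈ UHP n := by
  simp only [UHP, Set.mem_setOf_eq, iE_sub]
  exact Matrix.PosDef.one

lemma ne_zero_of_exp_eq {θ : ℝ} {w : ℂ}
    (hw : Complex.exp (Complex.I * θ) = w / ((‖w‖ : ℝ) : ℂ)) : w ≠ 0 := by
  rintro rfl
  simp only [norm_zero, Complex.ofReal_zero, div_zero] at hw
  exact Complex.exp_ne_zero _ hw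

lemma exp_eq_arg {θ : ℝ} (hθ : θ ∈ Set.Ioc (-Real.pi) Real.pi) {w : ℂ}
    (hw : Complex.exp (Complex.I * θ) = w / ((‖w‖ : ℝ) : ℂ)) : θ = Complex.arg w := by
  have hw0 : w ≠ 0 := ne_zero_of_exp_eq hw
  have habs : (0:ℝ) < ‖w‖ := norm_pos_iff.mpr hw0
  have hrepr : w = ((‖w‖ : ℝ) : ℂ) * (w / ((‖w‖ : ℝ) : ℂ)) := by
    field_simp
  rw [hrepr, Complex.arg_real_mul _ habs, ← hw, mul_comm, Complex.exp_mul_I]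
  exact (Complex.arg_cos_add_sin_mul_I hθ).symm

/-- positive real scalar multiple of a PosDef matrix -/
lemma posDef_real_smul {m : Type*} [Fintype m] {A : Matrix m m ℂ} (hA : A.PosDef)
    {a : ℝ} (ha : 0 < a) : (a • A).PosDef := by
  rw [posDef_iff_dotProduct_mulVec]
  constructor
  · show (a • A)ᴴ = a • A
    rw [conjTranspose_smul, star_trivial, hA.1.eq]
  · intro x hx
    have h := hA.dotProduct_mulVec_pos hx
    rw [smul_mulVec, dotProduct_smul]
    rw [Complex.lt_def] at h ⊢
    constructor
    · simp only [Complex.smul_re, Complex.zero_re, smul_eq_mul] at *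
      exact mul_pos ha h.1
    · simp only [Complex.smul_im, Complex.zero_im, smul_eq_mul] at *
      rw [← h.2]; ring

lemma posSemidef_real_smul {m : Type*} [Fintype m] {A : Matrix m m ℂ} (hA : A.PosDef)
    {a : ℝ} (ha : 0 ≤ a) : (a • A).PosSemidef := by
  rw [posSemidef_iff_dotProduct_mulVec]
  constructor
  · show (a • A)ᴴ = a • A
    rw [conjTranspose_smul, star_trivial, hA.1.eq]
  · intro x
    by_cases hx : x = 0
    · simp [hx]
    have h := hA.dotProduct_mulVec_pos hx
    rw [smul_mulVec, dotProduct_smul]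
    rw [Complex.lt_def] at h
    rw [Complex.le_def]
    constructor
    · simp only [Complex.smul_re, Complex.zero_re, smul_eq_mul]
      exact mul_nonneg ha h.1.le
    · simp only [Complex.smul_im, smul_eq_mul]
      rw [← h.2]
      simp

lemma uhp_convex (n : ℕ) : Convex ℝ (UHP n) := by
  intro Z₁ h₁ Z₂ h₂ a b ha hb hab
  simp only [UHP, Set.mem_setOf_eq] at h₁ h₂ ⊢
  have e1 : a • Z₁ + b • Z₂ - (a • Z₁ + b • Z₂)ᴴ
      = a • (Z₁ - Z₁ᴴ) + b • (Z₂ - Z₂ᴴ) := by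
    rw [conjTranspose_add, conjTranspose_smul, conjTranspose_smul,
      star_trivial, star_trivial]
    module
  rw [e1, smul_add, smul_comm ((2 * Complex.I)⁻¹) a, smul_comm ((2 * Complex.I)⁻¹) b]
  rcases eq_or_lt_of_le ha with ha0 | ha0
  · have hb1 : b = 1 := by linarith
    simp only [← ha0, hb1, zero_smul, one_smul, zero_add]
    exact h₂
  · exact (posDef_real_smul h₁ ha0).add_posSemidef (posSemidef_real_smul h₂ hb)

lemma posDef_conjTranspose_mul_self {m : Type*} [Fintype m] [DecidableEq m]
    (B : Matrix m m ℂ) (hB : IsUnit B.det) : (Bᴴ * B).PosDef := by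
  rw [posDef_iff_dotProduct_mulVec]
  constructor
  · show (Bᴴ * B)ᴴ = Bᴴ * B
    rw [conjTranspose_mul, conjTranspose_conjTranspose]
  · intro x hx
    have hBx : B *ᵥ x ≠ 0 := by
      intro h
      apply hx
      have hx' : x = (B⁻¹ * B) *ᵥ x := by
        rw [Matrix.nonsing_inv_mul _ hB, Matrix.one_mulVec]
      rw [← Matrix.mulVec_mulVec, h, Matrix.mulVec_zero] at hx'
      exact hx'
    have heq : star x ⬝ᵥ ((Bᴴ * B) *ᵥ x) = star (B *ᵥ x) ⬝ᵥ (B *ᵥ x) := by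
      rw [← Matrix.mulVec_mulVec, Matrix.dotProduct_mulVec, star_mulVec]
    rw [heq]
    exact Matrix.dotProduct_star_self_pos_iff.mpr hBx

/-- The block relations for M ∈ U(n,n). -/
lemma blocks_rel {n : ℕ} {M : HMat n} (hM : M ∈ UGrp n) :
    M.toBlocks₂₁ᴴ * M.toBlocks₁₁ - M.toBlocks₁₁ᴴ * M.toBlocks₂₁ = 0 ∧
    M.toBlocks₂₁ᴴ * M.toBlocks₁₂ - M.toBlocks₁₁ᴴ * M.toBlocks₂₂ = -1 ∧
    M.toBlocks₂₂ᴴ * M.toBlocks₁₁ - M.toBlocks₁₂ᴴ * M.toBlocks₂₁ = 1 ∧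
    M.toBlocks₂₂ᴴ * M.toBlocks₁₂ - M.toBlocks₁₂ᴴ * M.toBlocks₂₂ = 0 := by
  set A := M.toBlocks₁₁
  set B := M.toBlocks₁₂
  set C := M.toBlocks₂₁
  set D := M.toBlocks₂₂
  have hMb : M = Matrix.fromBlocks A B C D := (Matrix.fromBlocks_toBlocks M).symm
  have h : Mᴴ * Imat n * M = Imat n := hM
  rw [hMb, Imat, Matrix.fromBlocks_conjTranspose, Matrix.fromBlocks_multiply,
    Matrix.fromBlocks_multiply] at h
  rw [Matrix.fromBlocks_inj] at h
  obtain ⟨h11, h12, h21, h22⟩ := h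
  refine ⟨?_, ?_, ?_, ?_⟩
  · linear_combination (norm := noncomm_ring) h11
  · linear_combination (norm := noncomm_ring) h12
  · linear_combination (norm := noncomm_ring) h21
  · linear_combination (norm := noncomm_ring) h22

/-- The action of M ∈ U(n,n) sends iE into the upper half-plane, given that
J(M, iE) ≠ 0. -/
lemma act_mem_UHP {n : ℕ} {M : HMat n} (hM : M ∈ UGrp n)
    (hJ : Jfac M (iE n) ≠ 0) : matAct M (iE n) ∈ UHP n := by
  classical
  obtain ⟨e11, e12, e21, e22⟩ := blocks_rel hM
  set A := M.toBlocks₁₁ with hA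
  set B := M.toBlocks₁₂ with hB
  set C := M.toBlocks₂₁ with hC
  set D := M.toBlocks₂₂ with hD
  set Z := iE n with hZ
  set S := C * Z + D with hS
  set T := A * Z + B with hT
  have hSdet : IsUnit S.det := by
    rw [isUnit_iff_ne_zero]; exact hJ
  have hSS : S * S⁻¹ = 1 := Matrix.mul_nonsing_inv _ hSdet
  have hSS' : S⁻¹ * S = 1 := Matrix.nonsing_inv_mul _ hSdet
  -- key algebraic identity
  have key : Sᴴ * T - Tᴴ * S = Z - Zᴴ := by
    have expand : Sᴴ * T - Tᴴ * S
        = Zᴴ * (Cᴴ * A - Aᴴ * C) * Z + Zᴴ * (Cᴴ * B - Aᴴ * D)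
          + (Dᴴ * A - Bᴴ * C) * Z + (Dᴴ * B - Bᴴ * D) := by
      rw [hS, hT, conjTranspose_add, conjTranspose_add, conjTranspose_mul,
        conjTranspose_mul]
      noncomm_ring
    rw [expand, e11, e12, e21, e22]
    simp only [Matrix.mul_zero, Matrix.zero_mul, Matrix.mul_neg, Matrix.mul_one,
      Matrix.one_mul, add_zero, zero_add]
    noncomm_ring
  -- express W - Wᴴ
  have hW : matAct M Z = T * S⁻¹ := rfl
  have hWsub : matAct M Z - (matAct M Z)ᴴ = (S⁻¹)ᴴ * (Z - Zᴴ) * S⁻¹ := by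
    rw [hW, conjTranspose_mul, ← key]
    have h1 : T * S⁻¹ = (S⁻¹)ᴴ * (Sᴴ * T) * S⁻¹ := by
      rw [← Matrix.mul_assoc (S⁻¹)ᴴ Sᴴ T, ← Matrix.conjTranspose_mul, hSS,
        Matrix.conjTranspose_one, Matrix.one_mul]
    have h2 : (S⁻¹)ᴴ * Tᴴ = (S⁻¹)ᴴ * (Tᴴ * S) * S⁻¹ := by
      rw [Matrix.mul_assoc (S⁻¹)ᴴ (Tᴴ * S) S⁻¹, Matrix.mul_assoc Tᴴ S S⁻¹, hSS,
        Matrix.mul_one]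
    rw [h1, h2]
    noncomm_ring
  show ((2 * Complex.I)⁻¹ • (matAct M Z - (matAct M Z)ᴴ)).PosDef
  rw [hWsub]
  have hsm : (2 * Complex.I)⁻¹ • ((S⁻¹)ᴴ * (Z - Zᴴ) * S⁻¹)
      = (S⁻¹)ᴴ * ((2 * Complex.I)⁻¹ • (Z - Zᴴ)) * S⁻¹ := by
    rw [Matrix.mul_smul, Matrix.smul_mul]
  rw [hsm, hZ, iE_sub, Matrix.mul_one]
  exact posDef_conjTranspose_mul_self _ ((Matrix.isUnit_nonsing_inv_det _ hSdet))

end Stmt5Aux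

open Stmt5Aux in
/-- the value of the cocycle against the permutation matrix P. -/
theorem stmt5 (L : HMat 2 → Matrix (Fin 2) (Fin 2) ℂ → ℝ) (hL : IsArgOfJ 2 L)
    (M : HMat 2) (hM : M ∈ UGrp 2)
    (P : HMat 2) (hP : P = Matrix.fromBlocks !![0, 1; 1, 0] 0 0 !![0, 1; 1, 0])
    (z : ℂ) (hz : z = (Complex.I • M.toBlocks₂₁ + M.toBlocks₂₂).det) :
    wcoc L P M
        = (Complex.arg (-z) - Complex.arg z - Complex.arg (-1)) / (2 * Real.pi) ∧
    wcoc L M P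
        = (Complex.arg (-z) - Complex.arg z - Complex.arg (-1)) / (2 * Real.pi) := by
  classical
  set Q : Matrix (Fin 2) (Fin 2) ℂ := !![0, 1; 1, 0] with hQ
  have hQQ : Q * Q = 1 := by
    rw [hQ, Matrix.one_fin_two, Matrix.mul_fin_two]
    norm_num
  have hQH : Qᴴ = Q := by
    rw [hQ]
    ext i j
    fin_cases i <;> fin_cases j <;> simp [Matrix.conjTranspose_apply]
  have hQdet : Q.det = -1 := by
    rw [hQ, Matrix.det_fin_two_of]; ring
  -- P is in the group
  have hPU : P ∈ UGrp 2 := by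
    show Pᴴ * Imat 2 * P = Imat 2
    rw [hP, Imat, Matrix.fromBlocks_conjTranspose, Matrix.fromBlocks_multiply,
      Matrix.fromBlocks_multiply]
    simp [hQH, hQQ]
  -- blocks of P
  have hP11 : P.toBlocks₁₁ = Q := by rw [hP]; rfl
  have hP12 : P.toBlocks₁₂ = 0 := by rw [hP]; rfl
  have hP21 : P.toBlocks₂₁ = 0 := by rw [hP]; rfl
  have hP22 : P.toBlocks₂₂ = Q := by rw [hP]; rfl
  -- Jfac of P is constantly -1
  have hJP : ∀ Z : Matrix (Fin 2) (Fin 2) ℂ, Jfac P Z = -1 := by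
    intro Z
    rw [Jfac, hP21, hP22, Matrix.zero_mul, zero_add, hQdet]
  -- z is Jfac M iE
  have hzJ : Jfac M (iE 2) = z := by
    rw [Jfac, iE, hz, Matrix.mul_smul, Matrix.mul_one]
  -- blocks of products
  set A := M.toBlocks₁₁ with hA
  set B := M.toBlocks₁₂ with hB
  set C := M.toBlocks₂₁ with hC
  set D := M.toBlocks₂₂ with hD
  have hMb : M = Matrix.fromBlocks A B C D := (Matrix.fromBlocks_toBlocks M).symm
  have hPM : P * M = Matrix.fromBlocks (Q * A) (Q * B) (Q * C) (Q * D) := by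
    rw [hP, hMb, Matrix.fromBlocks_multiply]
    simp
  have hMP : M * P = Matrix.fromBlocks (A * Q) (B * Q) (C * Q) (D * Q) := by
    rw [hP, hMb, Matrix.fromBlocks_multiply]
    simp
  -- J(PM, iE) = -z
  have hJPM : Jfac (P * M) (iE 2) = -z := by
    rw [Jfac, hPM]
    show (Q * C * iE 2 + Q * D).det = -z
    have h : Q * C * iE 2 + Q * D = Q * (C * iE 2 + D) := by
      rw [Matrix.mul_add, Matrix.mul_assoc]
    rw [h, Matrix.det_mul, hQdet, show (C * iE 2 + D).det = z by rw [← hzJ]; rfl]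
    ring
  -- J(MP, iE) = -z
  have hJMP : Jfac (M * P) (iE 2) = -z := by
    rw [Jfac, hMP]
    show (C * Q * iE 2 + D * Q).det = -z
    have h : C * Q * iE 2 + D * Q = (C * iE 2 + D) * Q := by
      simp [iE, Matrix.add_mul, Matrix.mul_smul, Matrix.smul_mul, Matrix.mul_one]
    rw [h, Matrix.det_mul, hQdet, show (C * iE 2 + D).det = z by rw [← hzJ]; rfl]
    ring
  -- matAct P Z = Q * Z * Q
  have hQinv : Q⁻¹ = Q := Matrix.inv_eq_right_inv hQQ
  have hActP : ∀ Z : Matrix (Fin 2) (Fin 2) ℂ, matAct P Z = Q * Z * Q := by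
    intro Z
    rw [matAct, hP11, hP12, hP21, hP22, Matrix.zero_mul, zero_add, add_zero, hQinv]
  have hActPiE : matAct P (iE 2) = iE 2 := by
    rw [hActP, show iE 2 = Complex.I • (1 : Matrix (Fin 2) (Fin 2) ℂ) from rfl,
      Matrix.mul_smul, Matrix.mul_one, Matrix.smul_mul, hQQ]
  -- the data from hL
  obtain ⟨hPcont, hPexp, hPIoc⟩ := hL P hPU
  obtain ⟨hMcont, hMexp, hMIoc⟩ := hL M hM
  obtain ⟨hPMcont, hPMexp, hPMIoc⟩ := hL (P * M) (ugrp_mul hPU hM)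
  obtain ⟨hMPcont, hMPexp, hMPIoc⟩ := hL (M * P) (ugrp_mul hM hPU)
  -- values at iE
  have hz0 : z ≠ 0 := by
    rw [← hzJ]
    exact ne_zero_of_exp_eq (hMexp (iE 2) (iE_mem 2))
  have hLMiE : L M (iE 2) = Complex.arg z := by
    have h := exp_eq_arg hMIoc (hMexp (iE 2) (iE_mem 2))
    rwa [hzJ] at h
  have hLPMiE : L (P * M) (iE 2) = Complex.arg (-z) := by
    have h := exp_eq_arg hPMIoc (hPMexp (iE 2) (iE_mem 2))
    rwa [hJPM] at h
  have hLMPiE : L (M * P) (iE 2) = Complex.arg (-z) := by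
    have h := exp_eq_arg hMPIoc (hMPexp (iE 2) (iE_mem 2))
    rwa [hJMP] at h
  have hLPiE : L P (iE 2) = Real.pi := by
    have h := exp_eq_arg hPIoc (hPexp (iE 2) (iE_mem 2))
    rwa [hJP, Complex.arg_neg_one] at h
  -- L P is constantly π on UHP
  have hLPconst : ∀ W ∈ UHP 2, L P W = Real.pi := by
    have hcos : ∀ Z ∈ UHP 2, Real.cos (L P Z) = -1 := by
      intro Z hZ
      have h := hPexp Z hZ
      rw [hJP] at h
      norm_num at h
      have h2 : (Complex.exp (Complex.I * (L P Z : ℝ))).re = (-1 : ℂ).re := by rw [h]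
      rwa [mul_comm, Complex.exp_ofReal_mul_I_re, Complex.neg_re, Complex.one_re] at h2
    intro W hW
    have hpre : IsPreconnected (UHP 2) := (uhp_convex 2).isPreconnected
    have himg : IsPreconnected (L P '' UHP 2) := hpre.image _ hPcont
    have hord : (L P '' UHP 2).OrdConnected := himg.ordConnected
    have hπmem : Real.pi ∈ L P '' UHP 2 := ⟨iE 2, iE_mem 2, hLPiE⟩
    have htmem : L P W ∈ L P '' UHP 2 := ⟨W, hW, rfl⟩
    have hcosmem : ∀ s ∈ L P '' UHP 2, Real.cos s = -1 := by
      rintro s ⟨Z, hZ, rfl⟩; exact hcos Z hZ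
    set t := L P W with ht
    have hcost : Real.cos t = -1 := hcos W hW
    have hc1 : Real.cos (t - Real.pi) = 1 := by
      rw [Real.cos_sub_pi, hcost]; ring
    obtain ⟨m, hm⟩ := (Real.cos_eq_one_iff _).1 hc1
    by_contra hne
    have hpi := Real.pi_pos
    rcases lt_or_gt_of_ne hne with hlt | hgt
    · -- t < π, so m ≤ -1 and t ≤ -π; then 0 lies between t and π
      have hm1 : (m : ℝ) ≤ -1 := by
        have hmneg : m < 0 := by
          by_contra hcon
          push_neg at hcon
          have h0m : (0:ℝ) ≤ (m:ℝ) := by exact_mod_cast hcon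
          nlinarith
        have : m ≤ -1 := by omega
        exact_mod_cast this
      have ht' : t ≤ -Real.pi := by nlinarith
      have h0 : (0:ℝ) ∈ L P '' UHP 2 :=
        hord.out htmem hπmem ⟨by linarith, hpi.le⟩
      have hcontr := hcosmem 0 h0
      rw [Real.cos_zero] at hcontr
      norm_num at hcontr
    · -- t > π, so m ≥ 1 and t ≥ 3π; then 2π lies between π and t
      have hm1 : (1:ℝ) ≤ (m:ℝ) := by
        have hmpos : 0 < m := by
          by_contra hcon
          push_neg at hcon
          have h0m : (m:ℝ) ≤ 0 := by exact_mod_cast hcon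
          nlinarith
        exact_mod_cast hmpos
      have ht' : 3 * Real.pi ≤ t := by nlinarith
      have h2π : (2 * Real.pi) ∈ L P '' UHP 2 :=
        hord.out hπmem htmem ⟨by linarith, by linarith⟩
      have hcontr := hcosmem (2 * Real.pi) h2π
      rw [Real.cos_two_pi] at hcontr
      norm_num at hcontr
  -- M⟨iE⟩ ∈ UHP
  have hActM : matAct M (iE 2) ∈ UHP 2 := by
    apply act_mem_UHP hM
    rw [hzJ]; exact hz0
  have hLPact : L P (matAct M (iE 2)) = Real.pi := hLPconst _ hActM
  constructor
  · rw [wcoc, wAt, hLPMiE, hLPact, hLMiE, Complex.arg_neg_one]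
    ring
  · rw [wcoc, wAt, hActPiE, hLMPiE, hLMiE, hLPiE, Complex.arg_neg_one]
end
end

section
/- Let n = 2 and let S be a Hermitian 2×2 complex matrix (S = conj(S)ᵀ), and set M := ((E,S),(0,E)) ∈ U(2,2), where E is the 2×2 identity, and I := ((0,−E),(E,0)). Then w(I,M) = 0 if tr(S) ≥ 0, and w(I,M) = −1 if tr(S) < 0. -/
noncomputable section
open Matrix Complex
open scoped ComplexOrder

section Aux
open Matrix Complex

lemma sub_eq_int_mul_two_pi {x y : ℝ}
    (h : Complex.exp (Complex.I * x) = Complex.exp (Complex.I * y)) :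
    ∃ n : ℤ, x - y = n * (2 * Real.pi) := by
  have h1 : Complex.exp (Complex.I * x - Complex.I * y) = 1 := by
    rw [Complex.exp_sub, h, div_self (Complex.exp_ne_zero _)]
  rw [Complex.exp_eq_one_iff] at h1
  obtain ⟨n, hn⟩ := h1
  refine ⟨n, ?_⟩
  have h2 : Complex.I * ((x : ℂ) - y) = Complex.I * ((n : ℂ) * (2 * Real.pi)) := by
    rw [mul_sub, hn]; ring
  have h3 := mul_left_cancel₀ Complex.I_ne_zero h2
  exact_mod_cast h3

lemma exp_I_inj {x y : ℝ} (hx : x ∈ Set.Ioc (-Real.pi) Real.pi)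
    (hy : y ∈ Set.Ioc (-Real.pi) Real.pi)
    (h : Complex.exp (Complex.I * x) = Complex.exp (Complex.I * y)) : x = y := by
  obtain ⟨n, hn⟩ := sub_eq_int_mul_two_pi h
  have hpi := Real.pi_pos
  have hb1 : x - y < 2 * Real.pi := by
    have := hx.2; have := hy.1; linarith
  have hb2 : -(2 * Real.pi) < x - y := by
    have := hx.1; have := hy.2; linarith
  have hn1 : (n : ℝ) < 1 := by
    by_contra hc
    push_neg at hc
    nlinarith
  have hn2 : (-1 : ℝ) < n := by
    by_contra hc
    push_neg at hc
    nlinarith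
  have : n = 0 := by
    have h1 : n < 1 := by exact_mod_cast hn1
    have h2 : (-1 : ℤ) < n := by exact_mod_cast hn2
    omega
  rw [this] at hn
  push_cast at hn
  linarith

lemma lift_const {d : ℝ → ℝ} (hd : ContinuousOn d (Set.Icc 0 1))
    (hint : ∀ t ∈ Set.Icc (0:ℝ) 1, ∃ n : ℤ, d t = n * (2 * Real.pi))
    (h0 : d 0 = 0) : d 1 = 0 := by
  by_contra hne
  obtain ⟨n, hn⟩ := hint 1 (by norm_num)
  have hpi := Real.pi_pos
  have hn0 : n ≠ 0 := by
    rintro rfl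
    rw [hn] at hne; simp at hne
  rcases hn0.lt_or_gt with h | h
  · -- n ≤ -1
    have hle : (n : ℝ) ≤ -1 := by exact_mod_cast (by omega : n ≤ -1)
    have hd1 : d 1 ≤ -(2 * Real.pi) := by rw [hn]; nlinarith
    have hmem : -Real.pi ∈ Set.Icc (d 1) (d 0) := by
      constructor <;> [linarith; linarith]
    obtain ⟨t, ht, hteq⟩ := intermediate_value_Icc' (by norm_num : (0:ℝ) ≤ 1) hd hmem
    obtain ⟨m, hm⟩ := hint t ht
    have : ((2 * m + 1 : ℤ) : ℝ) * Real.pi = 0 := by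
      push_cast
      rw [hteq] at hm
      linarith
    have h2 : ((2 * m + 1 : ℤ) : ℝ) = 0 := by
      rcases mul_eq_zero.mp this with h' | h'
      · exact h'
      · exact absurd h' (ne_of_gt hpi)
    have : (2 * m + 1 : ℤ) = 0 := by exact_mod_cast h2
    omega
  · have hge : (1 : ℝ) ≤ n := by exact_mod_cast h
    have hd1 : 2 * Real.pi ≤ d 1 := by rw [hn]; nlinarith
    have hmem : Real.pi ∈ Set.Icc (d 0) (d 1) := by
      constructor <;> [linarith; linarith]
    obtain ⟨t, ht, hteq⟩ := intermediate_value_Icc (by norm_num : (0:ℝ) ≤ 1) hd hmem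
    obtain ⟨m, hm⟩ := hint t ht
    have : ((2 * m - 1 : ℤ) : ℝ) * Real.pi = 0 := by
      push_cast
      rw [hteq] at hm
      linarith
    have h2 : ((2 * m - 1 : ℤ) : ℝ) = 0 := by
      rcases mul_eq_zero.mp this with h' | h'
      · exact h'
      · exact absurd h' (ne_of_gt hpi)
    have : (2 * m - 1 : ℤ) = 0 := by exact_mod_cast h2
    omega

lemma exp_I_arg {z : ℂ} (hz : z ≠ 0) :
    Complex.exp (Complex.I * z.arg) = z / ((‖z‖ : ℝ) : ℂ) := by
  have hab : ((‖z‖ : ℝ) : ℂ) ≠ 0 := by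
    simpa using hz
  rw [mul_comm, eq_div_iff hab, mul_comm]
  exact Complex.norm_mul_exp_arg_mul_I z

lemma UGrp_mul {n : ℕ} {A B : HMat n} (hA : A ∈ UGrp n) (hB : B ∈ UGrp n) :
    A * B ∈ UGrp n := by
  simp only [UGrp, Set.mem_setOf_eq] at *
  rw [Matrix.conjTranspose_mul]
  calc Bᴴ * Aᴴ * Imat n * (A * B) = Bᴴ * (Aᴴ * Imat n * A) * B := by
        simp only [Matrix.mul_assoc]
    _ = Bᴴ * Imat n * B := by rw [hA]
    _ = Imat n := hB

lemma hMgrp' (S : Matrix (Fin 2) (Fin 2) ℂ) (hS : Sᴴ = S) :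
    Matrix.fromBlocks 1 S 0 1 ∈ UGrp 2 := by
  simp only [UGrp, Set.mem_setOf_eq, Imat, Matrix.fromBlocks_conjTranspose,
    Matrix.fromBlocks_multiply, Matrix.conjTranspose_one, Matrix.conjTranspose_zero, hS]
  simp

lemma hIgrp' : Imat 2 ∈ UGrp 2 := by
  simp only [UGrp, Set.mem_setOf_eq, Imat, Matrix.fromBlocks_conjTranspose,
    Matrix.fromBlocks_multiply, Matrix.conjTranspose_one, Matrix.conjTranspose_zero]
  simp

lemma hIMeq (S : Matrix (Fin 2) (Fin 2) ℂ) :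
    Imat 2 * Matrix.fromBlocks 1 S 0 1 = Matrix.fromBlocks 0 (-1) 1 S := by
  simp [Imat, Matrix.fromBlocks_multiply]

lemma hmact' (S Z : Matrix (Fin 2) (Fin 2) ℂ) :
    matAct (Matrix.fromBlocks 1 S 0 1) Z = S + Z := by
  simp [matAct, Matrix.toBlocks_fromBlocks₁₁, Matrix.toBlocks_fromBlocks₁₂,
    Matrix.toBlocks_fromBlocks₂₁, Matrix.toBlocks_fromBlocks₂₂, add_comm]

lemma hJM' (S Z : Matrix (Fin 2) (Fin 2) ℂ) :
    Jfac (Matrix.fromBlocks 1 S 0 1) Z = 1 := by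
  simp [Jfac]

lemma hJIM' (S Z : Matrix (Fin 2) (Fin 2) ℂ) :
    Jfac (Matrix.fromBlocks 0 (-1) 1 S) Z = (S + Z).det := by
  simp [Jfac, add_comm]

lemma hJI' (Z : Matrix (Fin 2) (Fin 2) ℂ) : Jfac (Imat 2) Z = Z.det := by
  simp [Jfac, Imat]

lemma hpUHP' (S : Matrix (Fin 2) (Fin 2) ℂ) (hS : Sᴴ = S) (t : ℝ) :
    ((t:ℂ) • S + iE 2) ∈ UHP 2 := by
  have hherm : ((t:ℂ) • S)ᴴ = (t:ℂ) • S := by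
    rw [Matrix.conjTranspose_smul, hS]; simp
  have key : ((t:ℂ) • S + iE 2) - ((t:ℂ) • S + iE 2)ᴴ
      = (2 * Complex.I) • (1 : Matrix (Fin 2) (Fin 2) ℂ) := by
    rw [Matrix.conjTranspose_add, hherm]
    simp only [iE, Matrix.conjTranspose_smul, Matrix.conjTranspose_one,
      Complex.star_def, Complex.conj_I]
    ext i j
    simp [Matrix.one_apply]
    split_ifs <;> ring
  simp only [UHP, Set.mem_setOf_eq, key, smul_smul]
  rw [inv_mul_cancel₀ (by simp : (2 * Complex.I) ≠ 0), one_smul]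
  exact Matrix.PosDef.one

lemma re_im_aux (x y : ℝ) :
    ((x:ℂ) + (y:ℂ)*Complex.I).re = x ∧ ((x:ℂ) + (y:ℂ)*Complex.I).im = y := by
  simp

lemma hdetp' (S : Matrix (Fin 2) (Fin 2) ℂ) (t a b : ℝ)
    (hdet : S.det = (a : ℂ)) (htr : S.trace = (b : ℂ)) :
    ((t:ℂ) • S + iE 2).det
      = ((t^2*a - 1 : ℝ) : ℂ) + ((t*b : ℝ) : ℂ) * Complex.I := by
  have h : ((t:ℂ) • S + iE 2).det
      = (t:ℂ)^2 * S.det + (t:ℂ) * S.trace * Complex.I - 1 := by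
    simp [iE, Matrix.det_fin_two, Matrix.trace_fin_two, Matrix.one_apply,
      Matrix.add_apply, Matrix.smul_apply]
    ring_nf
    simp [Complex.I_sq]
    ring
  rw [h, hdet, htr]
  push_cast
  ring

end Aux

/-- for M = ((E,S),(0,E)) with S Hermitian, w(I,M) = 0 if tr S ≥ 0
and w(I,M) = -1 if tr S < 0. -/
theorem stmt6 (L : HMat 2 → Matrix (Fin 2) (Fin 2) ℂ → ℝ) (hL : IsArgOfJ 2 L)
    (S : Matrix (Fin 2) (Fin 2) ℂ) (hS : Sᴴ = S)
    (M : HMat 2) (hM : M = Matrix.fromBlocks 1 S 0 1) :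
    (0 ≤ S.trace.re → wcoc L (Imat 2) M = 0) ∧
    (S.trace.re < 0 → wcoc L (Imat 2) M = -1) := by
  -- real determinant and trace of the Hermitian matrix S
  obtain ⟨a, b, hdet, htr, hba, htrre⟩ :
      ∃ a b : ℝ, S.det = (a : ℂ) ∧ S.trace = (b : ℂ) ∧ (b = 0 → a ≤ 0)
        ∧ S.trace.re = b := by
    have hconj : ∀ i j, (starRingEnd ℂ) (S j i) = S i j := by
      intro i j
      have := congrFun (congrFun hS i) j
      simpa [Matrix.conjTranspose_apply] using this
    have him00 : (S 0 0).im = 0 := Complex.conj_eq_iff_im.mp (hconj 0 0)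
    have him11 : (S 1 1).im = 0 := Complex.conj_eq_iff_im.mp (hconj 1 1)
    refine ⟨(S 0 0).re * (S 1 1).re - Complex.normSq (S 0 1),
      (S 0 0).re + (S 1 1).re, ?_, ?_, ?_, ?_⟩
    · have h10 : S 1 0 = (starRingEnd ℂ) (S 0 1) := (hconj 1 0).symm
      rw [Matrix.det_fin_two, h10, Complex.mul_conj]
      apply Complex.ext <;> simp [Complex.mul_re, Complex.mul_im, him00, him11]
    · rw [Matrix.trace_fin_two]
      apply Complex.ext <;> simp [him00, him11]
    · intro hb
      have h11 : (S 1 1).re = -(S 0 0).re := by linarith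
      rw [h11]
      nlinarith [Complex.normSq_nonneg (S 0 1), sq_nonneg ((S 0 0).re)]
    · rw [Matrix.trace_fin_two]; simp
  set p : ℝ → Matrix (Fin 2) (Fin 2) ℂ := fun t => (t:ℂ) • S + iE 2 with hp
  set F : ℝ → ℂ := fun t => ((t^2*a - 1 : ℝ) : ℂ) + ((t*b : ℝ) : ℂ) * Complex.I with hF
  have hpUHP : ∀ t : ℝ, p t ∈ UHP 2 := fun t => hpUHP' S hS t
  have hdetp : ∀ t : ℝ, (p t).det = F t := fun t => hdetp' S t a b hdet htr
  have hp0 : p 0 = iE 2 := by simp [hp]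
  have hp1 : p 1 = S + iE 2 := by simp [hp]
  have hiEUHP : iE 2 ∈ UHP 2 := by rw [← hp0]; exact hpUHP 0
  have hF0 : F 0 = -1 := by simp [hF]
  have hFre : ∀ t : ℝ, (F t).re = t^2*a - 1 := by
    intro t; rw [hF]; exact (re_im_aux _ _).1
  have hFim : ∀ t : ℝ, (F t).im = t*b := by
    intro t; rw [hF]; exact (re_im_aux _ _).2
  -- F stays off the closed positive real axis on [0,1]
  have hFslit : ∀ t ∈ Set.Icc (0:ℝ) 1, (F t).re < 0 ∨ (F t).im ≠ 0 := by
    intro t ht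
    by_cases hb : b = 0
    · left
      rw [hFre]
      have := hba hb
      nlinarith [sq_nonneg t, ht.1, ht.2]
    · rcases eq_or_lt_of_le ht.1 with h0 | h0
      · left; rw [hFre, ← h0]; norm_num
      · right; rw [hFim]; exact mul_ne_zero (ne_of_gt h0) hb
  have hFne : ∀ t ∈ Set.Icc (0:ℝ) 1, F t ≠ 0 := by
    intro t ht h
    rcases hFslit t ht with hr | hi
    · rw [h] at hr; simp at hr
    · rw [h] at hi; simp at hi
  have hnegslit : ∀ t ∈ Set.Icc (0:ℝ) 1, -(F t) ∈ Complex.slitPlane := by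
    intro t ht
    rw [Complex.mem_slitPlane_iff]
    rcases hFslit t ht with hr | hi
    · left; simpa using hr
    · right; simpa using hi
  -- group memberships
  have hMgrp : M ∈ UGrp 2 := by rw [hM]; exact hMgrp' S hS
  have hIgrp : Imat 2 ∈ UGrp 2 := hIgrp'
  have hIMgrp : Imat 2 * M ∈ UGrp 2 := UGrp_mul hIgrp hMgrp
  obtain ⟨hIcont, hIexp, hInorm'⟩ := hL (Imat 2) hIgrp
  obtain ⟨-, hMexp, hMnorm'⟩ := hL M hMgrp
  obtain ⟨-, hIMexp, hIMnorm'⟩ := hL (Imat 2 * M) hIMgrp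
  have hpi := Real.pi_pos
  -- exponential identity along the path
  have hgexp : ∀ t : ℝ, Complex.exp (Complex.I * (L (Imat 2) (p t) : ℝ))
      = F t / ((‖F t‖ : ℝ) : ℂ) := by
    intro t
    have h := hIexp (p t) (hpUHP t)
    rwa [hJI', hdetp] at h
  have hθexp : ∀ t ∈ Set.Icc (0:ℝ) 1,
      Complex.exp (Complex.I * ((Real.pi + Complex.arg (-(F t)) : ℝ) : ℂ))
        = F t / ((‖F t‖ : ℝ) : ℂ) := by
    intro t ht
    have hne := hFne t ht
    have hsplit : Complex.exp (Complex.I * ((Real.pi + Complex.arg (-(F t)) : ℝ) : ℂ))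
        = Complex.exp (Real.pi * Complex.I)
          * Complex.exp (Complex.I * (Complex.arg (-(F t)) : ℝ)) := by
      rw [← Complex.exp_add]
      push_cast
      ring_nf
    rw [hsplit, Complex.exp_pi_mul_I, exp_I_arg (neg_ne_zero.mpr hne),
      norm_neg]
    ring
  -- continuity of both lifts
  have hFcont : Continuous F := by
    rw [hF]
    exact (Complex.continuous_ofReal.comp (by fun_prop)).add
      ((Complex.continuous_ofReal.comp (by fun_prop)).mul continuous_const)
  have hpcont : Continuous p := by
    rw [hp]
    exact (Complex.continuous_ofReal.smul continuous_const).add continuous_const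
  have hgcont : ContinuousOn (fun t => L (Imat 2) (p t)) (Set.Icc (0:ℝ) 1) :=
    hIcont.comp hpcont.continuousOn (fun t _ => hpUHP t)
  have hθcont : ContinuousOn (fun t => Real.pi + Complex.arg (-(F t)))
      (Set.Icc (0:ℝ) 1) := by
    intro t ht
    have h1 : ContinuousAt (fun s : ℝ => Complex.arg (-(F s))) t :=
      ContinuousAt.comp (g := Complex.arg) (f := fun s : ℝ => -(F s))
        (Complex.continuousAt_arg (hnegslit t ht)) hFcont.neg.continuousAt
    exact (continuousAt_const.add h1).continuousWithinAt
  -- initial values agree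
  have hLI0 : L (Imat 2) (iE 2) = Real.pi := by
    refine exp_I_inj hInorm' ⟨by linarith, le_refl _⟩ ?_
    have h := hgexp 0
    rw [hp0] at h
    rw [h, hF0, mul_comm Complex.I ((Real.pi : ℝ) : ℂ), Complex.exp_pi_mul_I]
    simp
  -- transport the lift along the path
  have hd1 : L (Imat 2) (p 1) = Real.pi + Complex.arg (-(F 1)) := by
    have hkey := lift_const
      (d := fun t => L (Imat 2) (p t) - (Real.pi + Complex.arg (-(F t))))
      (hgcont.sub hθcont)
      (fun t ht => sub_eq_int_mul_two_pi ((hgexp t).trans (hθexp t ht).symm))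
      (by
        have hnegF0 : -(F 0) = 1 := by rw [hF0]; ring
        rw [hp0, hnegF0, Complex.arg_one, hLI0]
        ring)
    linarith
  -- the three values of L
  have hLIM : L (Imat 2 * M) (iE 2) = Complex.arg (F 1) := by
    have h := hIMexp (iE 2) hiEUHP
    have hJ : Jfac (Imat 2 * M) (iE 2) = F 1 := by
      rw [hM, hIMeq, hJIM', ← hp1, hdetp]
    rw [hJ] at h
    refine exp_I_inj hIMnorm' ⟨Complex.neg_pi_lt_arg _, Complex.arg_le_pi _⟩ ?_
    rw [h, exp_I_arg (hFne 1 (by norm_num))]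
  have hLM0 : L M (iE 2) = 0 := by
    have h := hMexp (iE 2) hiEUHP
    have hJ : Jfac M (iE 2) = 1 := by rw [hM, hJM']
    rw [hJ] at h
    refine exp_I_inj hMnorm' ⟨by linarith, by linarith⟩ ?_
    rw [h]
    simp
  have hmact : matAct M (iE 2) = p 1 := by
    rw [hM, hmact' S (iE 2), hp1]
  have hw : wcoc L (Imat 2) M
      = (Complex.arg (F 1) - (Real.pi + Complex.arg (-(F 1))) - 0) / (2*Real.pi) := by
    unfold wcoc wAt
    rw [hLIM, hmact, hd1, hLM0]
  have hF1im : (F 1).im = b := by rw [hFim]; ring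
  constructor
  · intro hb0
    rw [htrre] at hb0
    rcases lt_or_eq_of_le hb0 with hb | hb
    · rw [hw, Complex.arg_neg_eq_arg_sub_pi_of_im_pos (by rw [hF1im]; exact hb)]
      ring
    · have ha := hba hb.symm
      have hF1 : F 1 = ((a - 1 : ℝ) : ℂ) := by
        rw [hF]; simp [← hb]
      rw [hw, hF1, Complex.arg_ofReal_of_neg (by linarith),
        show -(((a - 1 : ℝ) : ℂ)) = ((1 - a : ℝ) : ℂ) by push_cast; ring,
        Complex.arg_ofReal_of_nonneg (by linarith)]
      ring
  · intro hb0
    rw [htrre] at hb0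
    rw [hw, Complex.arg_neg_eq_arg_add_pi_of_im_neg (by rw [hF1im]; exact hb0)]
    rw [div_eq_iff (by positivity : (2*Real.pi) ≠ 0)]
    ring
end
end
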